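/- With notation as above, for every 0 < M < 1 and every z in the closed disk D(1,M), the entire extension P(z) = z^{|E(S)|}(1-z)^{|∂S|} satisfies |P(z)| ≤ ((1+M)/(1-M))^{|E(S)|} · P(1-M). -/

import Mathlib

/-- For the polynomial `P(z) = z^{|E(S)|} (1-z)^{|∂S|}` (with `a = |E(S)|`,
`b = |∂S|` nonnegative integers), for every `0 < M < 1` and every `z` in the
closed disk `D(1,M)` we have `|P(z)| ≤ ((1+M)/(1-M))^{|E(S)|} · P(1-M)`. -/
theorem cluster_prob_complex_bound_near_one
    (a b : ℕ) (P : ℂ → ℂ) (hP : P = fun z : ℂ => z ^ a * (1 - z) ^ b)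
    (M : ℝ) (hM0 : 0 < M) (hM1 : M < 1) :
    ∀ z ∈ Metric.closedBall (1 : ℂ) M,
      ‖P z‖ ≤
        ((1 + M) / (1 - M)) ^ a * ((1 - M) ^ a * (1 - (1 - M)) ^ b) := by
  intro z hz
  rw [Metric.mem_closedBall, dist_eq_norm] at hz
  have h1 : 1 - M > 0 := by linarith
  have hz1 : ‖1 - z‖ ≤ M := by
    rw [← norm_neg]; simpa using hz
  have hzle : ‖z‖ ≤ 1 + M := by
    have h := norm_sub_norm_le z 1
    rw [norm_sub_rev] at h
    simp only [norm_one] at h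
    linarith
  have key : ‖P z‖ ≤ (1 + M) ^ a * M ^ b := by
    rw [hP]
    simp only [norm_mul, norm_pow]
    exact mul_le_mul (pow_le_pow_left₀ (norm_nonneg _) hzle a)
      (pow_le_pow_left₀ (norm_nonneg _) hz1 b) (by positivity) (by positivity)
  calc ‖P z‖ ≤ (1 + M) ^ a * M ^ b := key
    _ = ((1 + M) / (1 - M)) ^ a * ((1 - M) ^ a * (1 - (1 - M)) ^ b) := by
        rw [div_pow, sub_sub_cancel, ← mul_assoc, div_mul_cancel₀ _ (pow_ne_zero a h1.ne')]
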